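/- Let j be a positive half-integer, d = 2j+1, and 1 ≤ r < d. Then B_{j,r} ≥ ( r · Σ_{k=1}^{r} 1/(k(2j+1−k)) )^{−1}. -/

import Mathlib

open Matrix Kronecker BigOperators Finset
open scoped ComplexOrder

/-- Expectation value ⟨A⟩_ρ = Re tr(ρ A). -/
noncomputable def expval {n : Type*} [Fintype n] (ρ A : Matrix n n ℂ) : ℝ :=
  ((ρ * A).trace).re

/-- A density matrix: positive semidefinite with unit trace. -/
def IsDensityMatrix {n : Type*} [Fintype n] (ρ : Matrix n n ℂ) : Prop :=
  ρ.PosSemidef ∧ ρ.trace = 1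

/-- The projector |v⟩⟨v| associated to a vector. -/
noncomputable def pureState {n : Type*} (v : n → ℂ) : Matrix n n ℂ :=
  Matrix.vecMulVec v (star v)

/-- A normalized vector. -/
def IsUnitVec {n : Type*} [Fintype n] (v : n → ℂ) : Prop :=
  ∑ i, Complex.normSq (v i) = 1

/-- The canonical Hermitian operator basis of ℂ^d, indexed by pairs (j,k):
diagonal operators for j = k, real operators for j < k, imaginary operators for j > k. -/
noncomputable def canonG (d : ℕ) : Fin d × Fin d → Matrix (Fin d) (Fin d) ℂ := fun μ =>
  if μ.1 = μ.2 then Matrix.single μ.1 μ.1 1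
  else if μ.1 < μ.2 then
    ((Real.sqrt 2 : ℂ))⁻¹ • (Matrix.single μ.1 μ.2 1 + Matrix.single μ.2 μ.1 1)
  else
    (Complex.I * ((Real.sqrt 2 : ℂ))⁻¹) •
      (Matrix.single μ.2 μ.1 1 - Matrix.single μ.1 μ.2 1)

/-- Covariance matrix of a family of observables w.r.t. a state ρ. -/
noncomputable def covMat {n K : Type*} [Fintype n] (ρ : Matrix n n ℂ)
    (M : K → Matrix n n ℂ) : Matrix K K ℝ :=
  Matrix.of fun j k =>
    (1/2 : ℝ) * expval ρ (M j * M k + M k * M j) - expval ρ (M j) * expval ρ (M k)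

/-- The local observables (g_μ ⊗ 1, 1 ⊗ g_ν) on the bipartite space. -/
noncomputable def bipObs (d : ℕ) :
    (Fin d × Fin d) ⊕ (Fin d × Fin d) → Matrix (Fin d × Fin d) (Fin d × Fin d) ℂ :=
  Sum.elim (fun μ => canonG d μ ⊗ₖ (1 : Matrix (Fin d) (Fin d) ℂ))
           (fun ν => (1 : Matrix (Fin d) (Fin d) ℂ) ⊗ₖ canonG d ν)

/-- The full covariance matrix Γ_ρ of the canonical bipartite observables. -/
noncomputable def GammaCM (d : ℕ) (ρ : Matrix (Fin d × Fin d) (Fin d × Fin d) ℂ) :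
    Matrix ((Fin d × Fin d) ⊕ (Fin d × Fin d)) ((Fin d × Fin d) ⊕ (Fin d × Fin d)) ℝ :=
  covMat ρ (bipObs d)

/-- The cross-covariance block X_ρ. -/
noncomputable def crossCov (d : ℕ) (ρ : Matrix (Fin d × Fin d) (Fin d × Fin d) ℂ) :
    Matrix (Fin d × Fin d) (Fin d × Fin d) ℝ :=
  Matrix.of fun μ ν =>
    expval ρ (canonG d μ ⊗ₖ canonG d ν)
      - expval ρ (canonG d μ ⊗ₖ 1) * expval ρ ((1 : Matrix (Fin d) (Fin d) ℂ) ⊗ₖ canonG d ν)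

/-- Reduced state on the first subsystem. -/
noncomputable def redA (d : ℕ) (ρ : Matrix (Fin d × Fin d) (Fin d × Fin d) ℂ) :
    Matrix (Fin d) (Fin d) ℂ :=
  Matrix.of fun i j => ∑ k, ρ (i, k) (j, k)

/-- Reduced state on the second subsystem. -/
noncomputable def redB (d : ℕ) (ρ : Matrix (Fin d × Fin d) (Fin d × Fin d) ℂ) :
    Matrix (Fin d) (Fin d) ℂ :=
  Matrix.of fun i j => ∑ k, ρ (k, i) (k, j)

/-- Purity tr(σ²) (real part). -/
noncomputable def purity {n : Type*} [Fintype n] (σ : Matrix n n ℂ) : ℝ :=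
  ((σ * σ).trace).re

/-- Trace norm of a real matrix: sum of its singular values, i.e. tr √(XᵀX). -/
noncomputable def traceNorm {n : Type*} [Fintype n] [DecidableEq n] (X : Matrix n n ℝ) : ℝ :=
  ((Matrix.posSemidef_conjTranspose_mul_self X).1.eigenvectorUnitary.1 *
    Matrix.diagonal (fun i => Real.sqrt ((Matrix.posSemidef_conjTranspose_mul_self X).1.eigenvalues i)) *
    (star (Matrix.posSemidef_conjTranspose_mul_self X).1.eigenvectorUnitary : Matrix n n ℝ)).trace

/-- Schmidt rank of a pure state vector is the rank of its coefficient matrix. -/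
def SchmidtRankLE (d r : ℕ) (v : Fin d × Fin d → ℂ) : Prop :=
  (Matrix.of fun j k : Fin d => v (j, k)).rank ≤ r

/-- Schmidt number at most r. -/
def SchmidtNumberLE (d r : ℕ) (ρ : Matrix (Fin d × Fin d) (Fin d × Fin d) ℂ) : Prop :=
  ∃ (n : ℕ) (p : Fin n → ℝ) (ψ : Fin n → (Fin d × Fin d → ℂ)),
    (∀ k, 0 ≤ p k) ∧ (∑ k, p k = 1) ∧ (∀ k, IsUnitVec (ψ k)) ∧
    (∀ k, SchmidtRankLE d r (ψ k)) ∧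
    ρ = ∑ k, (p k : ℂ) • pureState (ψ k)

/-- Variance of an observable in a state. -/
noncomputable def varState {n : Type*} [Fintype n] (σ A : Matrix n n ℂ) : ℝ :=
  expval σ (A * A) - (expval σ A)^2

/-- The magnetic quantum number m_k = k - j - 1 (0-indexed: k - (d-1)/2). -/
noncomputable def spinM (d : ℕ) (k : Fin d) : ℝ := (k : ℝ) - ((d : ℝ) - 1) / 2

/-- The raising operator j₊ for spin j = (d-1)/2. -/
noncomputable def spinPlus (d : ℕ) : Matrix (Fin d) (Fin d) ℂ :=
  Matrix.of fun a b => if (a : ℕ) = (b : ℕ) + 1 then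
    (Real.sqrt (((d : ℝ) - 1) / 2 * (((d : ℝ) - 1) / 2 + 1) - spinM d b * (spinM d b + 1)) : ℂ)
  else 0

/-- The spin operator j_x = (j₊ + j₋)/2. -/
noncomputable def spinX (d : ℕ) : Matrix (Fin d) (Fin d) ℂ :=
  (1 / 2 : ℂ) • (spinPlus d + (spinPlus d)ᴴ)

/-- The spin operator j_y = (j₊ - j₋)/(2i). -/
noncomputable def spinY (d : ℕ) : Matrix (Fin d) (Fin d) ℂ :=
  (-Complex.I / 2) • (spinPlus d - (spinPlus d)ᴴ)

/-- The spin operator j_z. -/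
noncomputable def spinZ (d : ℕ) : Matrix (Fin d) (Fin d) ℂ :=
  Matrix.diagonal fun k => (spinM d k : ℂ)

/-- The quantity Σ_{k=1}^{d-1} k(d-k)(√λ_k - √λ_{k+1})² (0-indexed λ). -/
noncomputable def spinVarSum (d : ℕ) (lam : Fin d → ℝ) : ℝ :=
  ∑ k ∈ Finset.range (d - 1),
    ((k : ℝ) + 1) * ((d : ℝ) - ((k : ℝ) + 1)) *
      (Real.sqrt (if h : k < d then lam ⟨k, h⟩ else 0) -
       Real.sqrt (if h : k + 1 < d then lam ⟨k + 1, h⟩ else 0)) ^ 2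

/-- The bound B_{j,r}: infimum of Σ_k k(d-k)(√λ_k - √λ_{k+1})² over probability
vectors λ ∈ ℝ^d with at most r nonzero entries, where d = 2j+1. -/
noncomputable def Bspin (d r : ℕ) : ℝ :=
  sInf { v : ℝ | ∃ lam : Fin d → ℝ, (∀ k, 0 ≤ lam k) ∧ (∑ k, lam k = 1) ∧
    (Finset.univ.filter fun k => lam k ≠ 0).card ≤ r ∧ v = spinVarSum d lam }


namespace SpinAux

noncomputable def f (d k : ℕ) : ℝ := 1 / (((k : ℝ) + 1) * ((d : ℝ) - ((k : ℝ) + 1)))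

lemma w_pos {d k : ℕ} (h : k + 2 ≤ d) : 0 < ((k : ℝ) + 1) * ((d : ℝ) - ((k : ℝ) + 1)) := by
  have h' : ((k : ℝ)) + 2 ≤ (d : ℝ) := by exact_mod_cast h
  nlinarith [Nat.cast_nonneg (α := ℝ) k]

lemma f_pos {d k : ℕ} (h : k + 2 ≤ d) : 0 < f d k := by
  unfold f; exact one_div_pos.mpr (w_pos h)

lemma f_mono1 {d p t : ℕ} (h : 2*p + t + 2 ≤ d) : f d (p+t) ≤ f d p := by
  unfold f
  apply one_div_le_one_div_of_le (w_pos (by omega))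
  have hc : 2*(p:ℝ) + (t:ℝ) + 2 ≤ (d:ℝ) := by exact_mod_cast h
  push_cast
  nlinarith [Nat.cast_nonneg (α := ℝ) p, Nat.cast_nonneg (α := ℝ) t]

lemma f_mono2 {d p t : ℕ} (h1 : d ≤ 2*p + t + 2) (h2 : p + t + 2 ≤ d) : f d p ≤ f d (p+t) := by
  unfold f
  apply one_div_le_one_div_of_le (w_pos (by omega))
  have hc1 : (d:ℝ) ≤ 2*(p:ℝ) + (t:ℝ) + 2 := by exact_mod_cast h1
  have hc2 : (p:ℝ) + (t:ℝ) + 2 ≤ (d:ℝ) := by exact_mod_cast h2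
  push_cast
  nlinarith [Nat.cast_nonneg (α := ℝ) t]

noncomputable def W (d t p : ℕ) : ℝ := ∑ i ∈ Finset.range t, f d (p + i)

lemma W_step (d t p : ℕ) : W d t (p+1) = W d t p + (f d (p+t) - f d p) := by
  have h1 : ∑ i ∈ range (t+1), f d (p+i) = W d t p + f d (p+t) := Finset.sum_range_succ _ t
  have h2 : ∑ i ∈ range (t+1), f d (p+i)
      = (∑ i ∈ range t, f d (p+(i+1))) + f d (p+0) := Finset.sum_range_succ' _ t
  have h3 : W d t (p+1) = ∑ i ∈ range t, f d (p+(i+1)) := by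
    unfold W; apply Finset.sum_congr rfl; intro i _; congr 1; omega
  rw [h3]; simp only [Nat.add_zero] at h2; linarith

lemma f_sym {d k : ℕ} (hk : k + 2 ≤ d) : f d (d - 2 - k) = f d k := by
  unfold f
  have hc : ((d - 2 - k : ℕ) : ℝ) = (d:ℝ) - 2 - (k:ℝ) := by
    have h1 : (d - 2 - k) + (k + 2) = d := by omega
    have := congrArg (Nat.cast (R := ℝ)) h1
    push_cast at this; linarith
  rw [hc]; congr 1; ring

lemma W_sym {d t : ℕ} (h : t + 1 ≤ d) : W d t (d - 1 - t) = W d t 0 := by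
  unfold W
  rw [← Finset.sum_range_reflect (fun i => f d (d - 1 - t + i)) t]
  apply Finset.sum_congr rfl
  intro i hi
  have hi' : i < t := Finset.mem_range.mp hi
  have h1 : d - 1 - t + (t - 1 - i) = d - 2 - i := by omega
  rw [h1, f_sym (by omega)]
  congr 1; omega

lemma W_chainA {d t : ℕ} : ∀ p, 2*p + t ≤ d → W d t p ≤ W d t 0 := by
  intro p
  induction p with
  | zero => intro _; exact le_refl _
  | succ p ih =>
    intro h
    have h1 : W d t (p+1) = W d t p + (f d (p+t) - f d p) := W_step d t p
    have h2 : f d (p+t) ≤ f d p := f_mono1 (by omega)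
    have h3 : W d t p ≤ W d t 0 := ih (by omega)
    linarith

lemma W_chainB {d t : ℕ} : ∀ k p, p + k + t + 1 = d → d ≤ 2*p + t + 2 →
    W d t p ≤ W d t (d - 1 - t) := by
  intro k
  induction k with
  | zero =>
    intro p h1 _
    have : p = d - 1 - t := by omega
    rw [this]
  | succ k ih =>
    intro p h1 h2
    have hstep : W d t p ≤ W d t (p+1) := by
      have h3 : W d t (p+1) = W d t p + (f d (p+t) - f d p) := W_step d t p
      have h4 : f d p ≤ f d (p+t) := f_mono2 (by omega) (by omega)
      linarith
    exact le_trans hstep (ih (p+1) (by omega) (by omega))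

lemma W_le {d t p : ℕ} (h : p + t + 1 ≤ d) : W d t p ≤ W d t 0 := by
  rcases le_or_gt (2*p + t) d with hc | hc
  · exact W_chainA p hc
  · calc W d t p ≤ W d t (d - 1 - t) := W_chainB (d - 1 - t - p) p (by omega) (by omega)
    _ = W d t 0 := W_sym (by omega)

end SpinAux

lemma key_spin_bound (d r : ℕ) (hd : 2 ≤ d) (hr : 1 ≤ r) (hrd : r < d)
    (lam : Fin d → ℝ) (h0 : ∀ k, 0 ≤ lam k) (h1 : ∑ k, lam k = 1)
    (hcard : (Finset.univ.filter fun k => lam k ≠ 0).card ≤ r) :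
    ((r : ℝ) * ∑ k ∈ Finset.range r, 1 / (((k : ℝ) + 1) * ((d : ℝ) - ((k : ℝ) + 1))))⁻¹ ≤
      spinVarSum d lam := by
  classical
  set F := Finset.univ.filter (fun k : Fin d => lam k ≠ 0) with hF
  have hFsum : ∑ k ∈ F, lam k = 1 := by
    rw [hF, Finset.sum_filter_ne_zero]; exact h1
  have hFne : F.Nonempty := by
    rcases Finset.eq_empty_or_nonempty F with h | h
    · rw [h, Finset.sum_empty] at hFsum; norm_num at hFsum
    · exact h
  obtain ⟨m, hmF, hmax⟩ := Finset.exists_max_image F lam hFne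
  have hm1 : 1 ≤ (r:ℝ) * lam m := by
    have hle : ∑ k ∈ F, lam k ≤ F.card • lam m :=
      Finset.sum_le_card_nsmul F lam (lam m) (fun x hx => hmax x hx)
    rw [nsmul_eq_mul] at hle
    have hc : (F.card : ℝ) ≤ (r : ℝ) := Nat.cast_le.mpr hcard
    have hlm : 0 ≤ lam m := h0 m
    nlinarith
  have hr0 : (0:ℝ) < (r:ℝ) := by exact_mod_cast hr
  have hlm_pos : 0 < lam m := by nlinarith
  set L : ℕ → ℝ := fun k => if h : k < d then lam ⟨k, h⟩ else 0 with hLdef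
  have hL0 : ∀ k, 0 ≤ L k := by
    intro k; rw [hLdef]; dsimp only
    split
    · exact h0 _
    · exact le_refl 0
  set M := (m : ℕ) with hMdef
  have hMd : M < d := m.isLt
  have hLM : L M = lam m := by rw [hLdef]; simp [hMd]; rfl
  have hrd1 : r ≤ d - 1 := by omega
  -- find a zero entry near M
  have hzex : ∃ z ∈ Finset.Icc (M - r) (min (M + r) (d - 1)), L z = 0 := by
    by_contra hcon
    push_neg at hcon
    have hdlt : 0 < d := by omega
    have hmap : ∀ z ∈ Finset.Icc (M - r) (min (M + r) (d - 1)),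
        (⟨z % d, Nat.mod_lt z hdlt⟩ : Fin d) ∈ F := by
      intro z hz
      have hz2 := Finset.mem_Icc.mp hz
      have hzd : z < d := by
        have := le_trans hz2.2 (min_le_right _ _); omega
      have hmod : z % d = z := Nat.mod_eq_of_lt hzd
      have hne := hcon z hz
      rw [hLdef] at hne; simp only [hzd, dif_pos] at hne
      rw [hF, Finset.mem_filter]
      refine ⟨Finset.mem_univ _, ?_⟩
      convert hne using 2
      exact Fin.ext hmod
    have hinj : Set.InjOn (fun z : ℕ => (⟨z % d, Nat.mod_lt z hdlt⟩ : Fin d))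
        ↑(Finset.Icc (M - r) (min (M + r) (d - 1))) := by
      intro x hx y hy hxy
      simp only [Finset.coe_Icc, Set.mem_Icc] at hx hy
      have hxd : x < d := by have := le_trans hx.2 (min_le_right _ _); omega
      have hyd : y < d := by have := le_trans hy.2 (min_le_right _ _); omega
      have h2 : x % d = y % d := Fin.mk.inj_iff.mp hxy
      rwa [Nat.mod_eq_of_lt hxd, Nat.mod_eq_of_lt hyd] at h2
    have hcard2 := Finset.card_le_card_of_injOn _ hmap hinj
    rw [Nat.card_Icc] at hcard2
    have hcardF : F.card ≤ r := hcard
    have hmin1 : min (M + r) (d - 1) ≤ M + r := min_le_left _ _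
    have hmin2 : min (M + r) (d - 1) ≤ d - 1 := min_le_right _ _
    have hmin3 : M + r ≤ d - 1 ∨ min (M + r) (d - 1) = d - 1 := by
      rcases le_total (M + r) (d - 1) with h | h
      · exact Or.inl h
      · exact Or.inr (min_eq_right h)
    rcases hmin3 with h | h
    · rw [min_eq_left h] at hcard2; omega
    · rw [h] at hcard2; omega
  obtain ⟨z, hzmem, hz0⟩ := hzex
  have hzIcc := Finset.mem_Icc.mp hzmem
  have hzd : z ≤ d - 1 := le_trans hzIcc.2 (min_le_right _ _)
  have hzMr : z ≤ M + r := le_trans hzIcc.2 (min_le_left _ _)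
  have hzM : z ≠ M := by
    intro h; rw [h, hLM] at hz0; linarith
  set p := min z M with hpdef
  set q := max z M with hqdef
  set t := q - p with htdef
  have hpq : p + t = q := by
    have : p ≤ q := min_le_max; omega
  have hqd : q ≤ d - 1 := by
    rcases le_total z M with h | h
    · rw [hqdef, max_eq_right h]; omega
    · rw [hqdef, max_eq_left h]; exact hzd
  have ht1 : 1 ≤ t := by
    rcases lt_or_gt_of_ne hzM with h | h
    · have h1 : p = z := min_eq_left h.le
      have h2 : q = M := max_eq_right h.le
      omega
    · have h1 : p = M := min_eq_right h.le
      have h2 : q = z := max_eq_left h.le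
      omega
  have htr : t ≤ r := by
    rcases le_total z M with h | h
    · have h1 : p = z := min_eq_left h
      have h2 : q = M := max_eq_right h
      have := hzIcc.1
      omega
    · have h1 : p = M := min_eq_right h
      have h2 : q = z := max_eq_left h
      omega
  set a : ℕ → ℝ := fun k => Real.sqrt (L k) with hadef
  have haz : a z = 0 := by rw [hadef]; simp only; rw [hz0, Real.sqrt_zero]
  have hsq : (a p - a q)^2 = lam m := by
    have hAM : (a M)^2 = lam m := by
      rw [hadef]; dsimp only; rw [Real.sq_sqrt (hL0 M), hLM]
    rcases lt_or_gt_of_ne hzM with h | h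
    · rw [hpdef, hqdef, min_eq_left h.le, max_eq_right h.le, haz]
      rw [← hAM]; ring
    · rw [hpdef, hqdef, min_eq_right h.le, max_eq_left h.le, haz]
      rw [← hAM]; ring
  have htel : ∑ i ∈ Finset.range t, (a (p+i) - a (p+i+1)) = a p - a q := by
    have h := Finset.sum_range_sub' (fun i => a (p+i)) t
    simp only [Nat.add_zero] at h
    rw [← hpq]
    exact h
  have hpi2 : ∀ i ∈ Finset.range t, p + i + 2 ≤ d := by
    intro i hi
    have := Finset.mem_range.mp hi
    omega
  -- Cauchy-Schwarz
  have hCS : lam m ≤ (∑ i ∈ Finset.range t, SpinAux.f d (p+i)) *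
      (∑ i ∈ Finset.range t,
        (((p+i : ℕ) : ℝ)+1) * ((d:ℝ) - (((p+i : ℕ) : ℝ)+1)) * (a (p+i) - a (p+i+1))^2) := by
    have hcs := Finset.sum_mul_sq_le_sq_mul_sq (Finset.range t)
      (fun i => Real.sqrt (SpinAux.f d (p+i)))
      (fun i => Real.sqrt ((((p+i : ℕ) : ℝ)+1) * ((d:ℝ) - (((p+i : ℕ) : ℝ)+1))) *
        (a (p+i) - a (p+i+1)))
    have hw1 : ∀ i ∈ Finset.range t,
        Real.sqrt (SpinAux.f d (p+i)) *
          (Real.sqrt ((((p+i : ℕ) : ℝ)+1) * ((d:ℝ) - (((p+i : ℕ) : ℝ)+1))) *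
            (a (p+i) - a (p+i+1))) = a (p+i) - a (p+i+1) := by
      intro i hi
      have hwp := SpinAux.w_pos (d := d) (k := p+i) (hpi2 i hi)
      have hfw : SpinAux.f d (p+i) *
          ((((p+i : ℕ) : ℝ)+1) * ((d:ℝ) - (((p+i : ℕ) : ℝ)+1))) = 1 := by
        unfold SpinAux.f
        exact one_div_mul_cancel hwp.ne'
      have hone : Real.sqrt (SpinAux.f d (p+i)) *
          Real.sqrt ((((p+i : ℕ) : ℝ)+1) * ((d:ℝ) - (((p+i : ℕ) : ℝ)+1))) = 1 := by
        rw [← Real.sqrt_mul (SpinAux.f_pos (hpi2 i hi)).le, hfw, Real.sqrt_one]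
      calc Real.sqrt (SpinAux.f d (p+i)) *
            (Real.sqrt ((((p+i : ℕ) : ℝ)+1) * ((d:ℝ) - (((p+i : ℕ) : ℝ)+1))) *
              (a (p+i) - a (p+i+1)))
          = (Real.sqrt (SpinAux.f d (p+i)) *
              Real.sqrt ((((p+i : ℕ) : ℝ)+1) * ((d:ℝ) - (((p+i : ℕ) : ℝ)+1)))) *
              (a (p+i) - a (p+i+1)) := by ring
        _ = a (p+i) - a (p+i+1) := by rw [hone, one_mul]
    have hu2 : ∀ i ∈ Finset.range t,
        Real.sqrt (SpinAux.f d (p+i)) ^ 2 = SpinAux.f d (p+i) := by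
      intro i hi
      exact Real.sq_sqrt (SpinAux.f_pos (hpi2 i hi)).le
    have hv2 : ∀ i ∈ Finset.range t,
        (Real.sqrt ((((p+i : ℕ) : ℝ)+1) * ((d:ℝ) - (((p+i : ℕ) : ℝ)+1))) *
          (a (p+i) - a (p+i+1)))^2 =
        (((p+i : ℕ) : ℝ)+1) * ((d:ℝ) - (((p+i : ℕ) : ℝ)+1)) * (a (p+i) - a (p+i+1))^2 := by
      intro i hi
      rw [mul_pow, Real.sq_sqrt (SpinAux.w_pos (hpi2 i hi)).le]
    rw [Finset.sum_congr rfl hw1, htel, hsq, Finset.sum_congr rfl hu2,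
      Finset.sum_congr rfl hv2] at hcs
    exact hcs
  -- the window sum is bounded by the boundary sum
  set C := ∑ k ∈ Finset.range r, SpinAux.f d k with hCdef
  have hCpos : 0 < C := by
    rw [hCdef]
    apply Finset.sum_pos
    · intro k hk
      exact SpinAux.f_pos (by have := Finset.mem_range.mp hk; omega)
    · exact ⟨0, Finset.mem_range.mpr hr⟩
  have hWleC : (∑ i ∈ Finset.range t, SpinAux.f d (p+i)) ≤ C := by
    have h1 : (∑ i ∈ Finset.range t, SpinAux.f d (p+i)) = SpinAux.W d t p := rfl
    have h2 : SpinAux.W d t p ≤ SpinAux.W d t 0 := SpinAux.W_le (by omega)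
    have h3 : SpinAux.W d t 0 = ∑ i ∈ Finset.range t, SpinAux.f d i := by
      unfold SpinAux.W
      apply Finset.sum_congr rfl
      intro i _
      rw [Nat.zero_add]
    have h4 : (∑ i ∈ Finset.range t, SpinAux.f d i) ≤ C := by
      rw [hCdef]
      apply Finset.sum_le_sum_of_subset_of_nonneg (Finset.range_subset_range.mpr htr)
      intro k hk _
      exact (SpinAux.f_pos (by have := Finset.mem_range.mp hk; omega)).le
    rw [h1]
    exact le_trans h2 (le_trans (le_of_eq h3) h4)
  have hW0 : 0 ≤ ∑ i ∈ Finset.range t, SpinAux.f d (p+i) :=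
    Finset.sum_nonneg fun i hi => (SpinAux.f_pos (hpi2 i hi)).le
  -- the partial variance sum is bounded by the full one
  have hSVS : spinVarSum d lam = ∑ k ∈ Finset.range (d-1),
      ((k:ℝ)+1) * ((d:ℝ) - ((k:ℝ)+1)) * (a k - a (k+1))^2 := by
    rw [hadef, hLdef]
    rfl
  have hterm0 : ∀ k ∈ Finset.range (d-1),
      0 ≤ ((k:ℝ)+1) * ((d:ℝ) - ((k:ℝ)+1)) * (a k - a (k+1))^2 := by
    intro k hk
    have := Finset.mem_range.mp hk
    exact mul_nonneg (SpinAux.w_pos (by omega)).le (sq_nonneg _)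
  have hsub : (∑ i ∈ Finset.range t,
      (((p+i : ℕ) : ℝ)+1) * ((d:ℝ) - (((p+i : ℕ) : ℝ)+1)) * (a (p+i) - a (p+i+1))^2)
      ≤ spinVarSum d lam := by
    rw [hSVS]
    have hIco : ∑ i ∈ Finset.range t,
        (((p+i : ℕ) : ℝ)+1) * ((d:ℝ) - (((p+i : ℕ) : ℝ)+1)) * (a (p+i) - a (p+i+1))^2
        = ∑ k ∈ Finset.Ico p (p+t),
        ((k:ℝ)+1) * ((d:ℝ) - ((k:ℝ)+1)) * (a k - a (k+1))^2 := by
      rw [Finset.sum_Ico_eq_sum_range]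
      simp only [Nat.add_sub_cancel_left]
    rw [hIco]
    apply Finset.sum_le_sum_of_subset_of_nonneg
    · intro k hk
      have := Finset.mem_Ico.mp hk
      exact Finset.mem_range.mpr (by omega)
    · intro k hk _
      exact hterm0 k hk
  have hsub0 : 0 ≤ ∑ i ∈ Finset.range t,
      (((p+i : ℕ) : ℝ)+1) * ((d:ℝ) - (((p+i : ℕ) : ℝ)+1)) * (a (p+i) - a (p+i+1))^2 :=
    Finset.sum_nonneg fun i hi =>
      mul_nonneg (SpinAux.w_pos (hpi2 i hi)).le (sq_nonneg _)
  have hS0 : 0 ≤ spinVarSum d lam := le_trans hsub0 hsub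
  have hfin : lam m ≤ C * spinVarSum d lam := by
    calc lam m ≤ (∑ i ∈ Finset.range t, SpinAux.f d (p+i)) *
        (∑ i ∈ Finset.range t,
          (((p+i : ℕ) : ℝ)+1) * ((d:ℝ) - (((p+i : ℕ) : ℝ)+1)) * (a (p+i) - a (p+i+1))^2) := hCS
      _ ≤ C * (∑ i ∈ Finset.range t,
          (((p+i : ℕ) : ℝ)+1) * ((d:ℝ) - (((p+i : ℕ) : ℝ)+1)) * (a (p+i) - a (p+i+1))^2) :=
        mul_le_mul_of_nonneg_right hWleC hsub0
      _ ≤ C * spinVarSum d lam := mul_le_mul_of_nonneg_left hsub hCpos.le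
  have hgoalC : (∑ k ∈ Finset.range r, 1 / (((k : ℝ) + 1) * ((d : ℝ) - ((k : ℝ) + 1)))) = C := rfl
  rw [hgoalC]
  have hrC : 0 < (r:ℝ) * C := mul_pos hr0 hCpos
  rw [inv_le_iff_one_le_mul₀ hrC]
  nlinarith

/-- B_{j,r} ≥ ( r · Σ_{k=1}^r 1/(k(2j+1-k)) )⁻¹, where d = 2j+1. -/
theorem Bspin_lower_bound_harmonic
    (d r : ℕ) (hd : 2 ≤ d) (hr : 1 ≤ r) (hrd : r < d) :
    ((r : ℝ) * ∑ k ∈ Finset.range r, 1 / (((k : ℝ) + 1) * ((d : ℝ) - ((k : ℝ) + 1))))⁻¹ ≤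
      Bspin d r := by
  unfold Bspin
  apply le_csInf
  · refine ⟨spinVarSum d (fun k => if k = (⟨0, by omega⟩ : Fin d) then 1 else 0),
      (fun k => if k = (⟨0, by omega⟩ : Fin d) then 1 else 0), ?_, ?_, ?_, rfl⟩
    · intro k
      dsimp only
      split <;> norm_num
    · simp
    · have hsub : (Finset.univ.filter fun k : Fin d =>
          (if k = (⟨0, by omega⟩ : Fin d) then (1:ℝ) else 0) ≠ 0) ⊆ {(⟨0, by omega⟩ : Fin d)} := by
        intro k hk
        rw [Finset.mem_filter] at hk
        rcases hk with ⟨-, hk⟩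
        by_contra hne
        rw [Finset.mem_singleton] at hne
        rw [if_neg hne] at hk
        exact hk rfl
      calc (Finset.univ.filter fun k : Fin d =>
            (if k = (⟨0, by omega⟩ : Fin d) then (1:ℝ) else 0) ≠ 0).card
          ≤ ({(⟨0, by omega⟩ : Fin d)} : Finset (Fin d)).card := Finset.card_le_card hsub
        _ = 1 := Finset.card_singleton _
        _ ≤ r := hr
  · rintro v ⟨lam, h0, h1, hcard, rfl⟩
    exact key_spin_bound d r hd hr hrd lam h0 h1 hcard
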